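/- arXiv:1509.08637 — 2 statements merged into one kernel-verified Lean document; each statement's English description precedes it below -/
import Mathlib

section
/- Let φ(θ) = -m cos(θ - θ₀) with m ≥ 0 and θ₀ ∈ T, and let f ∈ L¹(T × ℝ) be nonnegative. Then ∬ (v²/2 + φ(θ)) f^{*φ}(θ,v) dθ dv = ∫₀^∞ f^♯(s) a_φ⁻¹(s) ds. -/
open MeasureTheory Real Set
open scoped ENNReal

/-- Distribution function μ_f(t) = |{(θ,v) ∈ T × ℝ : f(θ,v) > t}|, T = [0,2π). -/
noncomputable def distrib (f : ℝ × ℝ → ℝ) (t : ℝ) : ℝ≥0∞ :=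
  volume {p : ℝ × ℝ | p.1 ∈ Set.Ico (0:ℝ) (2 * π) ∧ t < f p}

/-- Pseudo-inverse f^♯(s) = inf{t ≥ 0 : μ_f(t) ≤ s}. -/
noncomputable def pseudoInv (f : ℝ × ℝ → ℝ) (s : ℝ≥0∞) : ℝ :=
  sInf {t : ℝ | 0 ≤ t ∧ distrib f t ≤ s}

/-- Phase-space volume a_φ(e) = |{(θ,v) ∈ T × ℝ : v²/2 + φ(θ) < e}|. -/
noncomputable def aVol (φ : ℝ → ℝ) (e : ℝ) : ℝ≥0∞ :=
  volume {p : ℝ × ℝ | p.1 ∈ Set.Ico (0:ℝ) (2 * π) ∧ p.2 ^ 2 / 2 + φ p.1 < e}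

section aux

variable (m θ₀ : ℝ)

/-- The potential. -/
noncomputable def phiF : ℝ → ℝ := fun θ => -(m * Real.cos (θ - θ₀))

/-- The microscopic energy. -/
noncomputable def EF : ℝ × ℝ → ℝ := fun p => p.2 ^ 2 / 2 + phiF m θ₀ p.1

/-- The strip T × ℝ. -/
def stripS : Set (ℝ × ℝ) := {p : ℝ × ℝ | p.1 ∈ Set.Ico (0:ℝ) (2 * π)}

variable {m θ₀}

lemma phi_ge (hm : 0 ≤ m) (θ : ℝ) : -m ≤ phiF m θ₀ θ := by
  have : m * Real.cos (θ - θ₀) ≤ m * 1 :=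
    mul_le_mul_of_nonneg_left (Real.cos_le_one _) hm
  simpa [phiF] using neg_le_neg this

lemma E_ge (hm : 0 ≤ m) (p : ℝ × ℝ) : -m ≤ EF m θ₀ p := by
  have h1 : (0:ℝ) ≤ p.2 ^ 2 / 2 := by positivity
  have := phi_ge (θ₀ := θ₀) hm p.1
  simp only [EF, phiF] at *; linarith

lemma phi_cont : Continuous (phiF m θ₀) := by unfold phiF; fun_prop

lemma E_meas : Measurable (EF m θ₀) := by
  apply Measurable.add
  · exact (measurable_snd.pow_const 2).div_const 2
  · exact (phi_cont.measurable).comp measurable_fst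

lemma strip_meas : MeasurableSet (stripS) := by
  have : stripS = Set.Ico (0:ℝ) (2 * π) ×ˢ (Set.univ : Set ℝ) := by
    ext p; simp [stripS]
  rw [this]; exact measurableSet_Ico.prod MeasurableSet.univ

lemma aVol_set_meas (e : ℝ) :
    MeasurableSet {p : ℝ × ℝ | p.1 ∈ Set.Ico (0:ℝ) (2 * π) ∧ p.2 ^ 2 / 2 + phiF m θ₀ p.1 < e} := by
  exact (strip_meas).inter ((E_meas (m := m) (θ₀ := θ₀)) measurableSet_Iio)

lemma aVol_mono (φ : ℝ → ℝ) : Monotone (aVol φ) := by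
  intro x y hxy
  apply measure_mono
  intro p hp
  exact ⟨hp.1, lt_of_lt_of_le hp.2 hxy⟩

lemma aVol_lt_top (hm : 0 ≤ m) (e : ℝ) : aVol (phiF m θ₀) e < ∞ := by
  set R : ℝ := Real.sqrt (2 * (max (e + m) 0) + 1) with hR
  have hsub : {p : ℝ × ℝ | p.1 ∈ Set.Ico (0:ℝ) (2 * π) ∧ p.2 ^ 2 / 2 + phiF m θ₀ p.1 < e}
      ⊆ Set.Ico (0:ℝ) (2 * π) ×ˢ Set.Ioo (-R) R := by
    rintro ⟨θ, v⟩ ⟨h1, h2⟩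
    refine ⟨h1, ?_⟩
    have hφ := phi_ge (θ₀ := θ₀) hm θ
    have hv2 : v ^ 2 < 2 * (max (e + m) 0) + 1 := by
      have : v ^ 2 / 2 < e + m := by simp only [phiF] at h2 hφ; linarith
      have h3 : e + m ≤ max (e + m) 0 := le_max_left _ _
      nlinarith
    have hRnn : 0 ≤ 2 * (max (e + m) 0) + 1 := by positivity
    have habs : |v| < R := by
      rw [hR, ← Real.sqrt_sq_eq_abs]
      exact Real.sqrt_lt_sqrt (sq_nonneg v) hv2
    rw [abs_lt] at habs
    exact ⟨habs.1, habs.2⟩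
  calc aVol (phiF m θ₀) e ≤ volume (Set.Ico (0:ℝ) (2 * π) ×ˢ Set.Ioo (-R) R) :=
        measure_mono hsub
    _ < ∞ := by
        rw [Measure.volume_eq_prod, Measure.prod_prod, Real.volume_Ico, Real.volume_Ioo]
        exact ENNReal.mul_lt_top ENNReal.ofReal_lt_top ENNReal.ofReal_lt_top

lemma aVol_strict (hm : 0 ≤ m) {x y : ℝ} (hx : -m ≤ x) (hxy : x < y) :
    aVol (phiF m θ₀) x < aVol (phiF m θ₀) y := by
  have hπ : 0 < π := Real.pi_pos
  set θs : ℝ := θ₀ - ⌊θ₀ / (2 * π)⌋ * (2 * π) with hθs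
  have h2π : (0:ℝ) < 2 * π := by linarith
  have hθs0 : 0 ≤ θs := by
    have := Int.floor_le (θ₀ / (2 * π))
    have h1 : (⌊θ₀ / (2 * π)⌋ : ℝ) * (2 * π) ≤ (θ₀ / (2 * π)) * (2 * π) :=
      mul_le_mul_of_nonneg_right this h2π.le
    rw [div_mul_cancel₀ _ h2π.ne'] at h1
    simp only [hθs]; linarith
  have hθs2 : θs < 2 * π := by
    have := Int.lt_floor_add_one (θ₀ / (2 * π))
    have h1 : (θ₀ / (2 * π)) * (2 * π) < ((⌊θ₀ / (2 * π)⌋ : ℝ) + 1) * (2 * π) :=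
      mul_lt_mul_of_pos_right this h2π
    rw [div_mul_cancel₀ _ h2π.ne'] at h1
    simp only [hθs]; ring_nf; ring_nf at h1; linarith
  have hφθs : phiF m θ₀ θs = -m := by
    have : θs - θ₀ = -(⌊θ₀ / (2 * π)⌋ * (2 * π)) := by simp only [hθs]; ring
    simp only [phiF, this, Real.cos_neg, Real.cos_int_mul_two_pi, mul_one]
  -- continuity: get δ with φ < -m + (y-x)/2 on ball
  set ε : ℝ := (y - x) / 2 with hε
  have hεpos : 0 < ε := by simp only [hε]; linarith
  have hU : IsOpen ((phiF m θ₀) ⁻¹' Set.Iio (-m + ε)) :=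
    (phi_cont).isOpen_preimage _ isOpen_Iio
  have hθsU : θs ∈ (phiF m θ₀) ⁻¹' Set.Iio (-m + ε) := by
    simp only [Set.mem_preimage, Set.mem_Iio, hφθs]; linarith
  obtain ⟨δ, hδpos, hball⟩ := Metric.isOpen_iff.1 hU θs hθsU
  set δ' : ℝ := min δ (2 * π - θs) with hδ'
  have hδ'pos : 0 < δ' := lt_min hδpos (by linarith)
  set J : Set ℝ := Set.Ico θs (θs + δ') with hJ
  set K : Set ℝ := Set.Ico (Real.sqrt (2 * (x + m))) (Real.sqrt (2 * (x + m) + (y - x))) with hK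
  have hxm : 0 ≤ x + m := by linarith
  -- properties of points in the box
  have hbox : ∀ p : ℝ × ℝ, p ∈ J ×ˢ K → (p.1 ∈ Set.Ico (0:ℝ) (2 * π) ∧ x ≤ EF m θ₀ p ∧ EF m θ₀ p < y) := by
    rintro ⟨θ, v⟩ ⟨hθ, hv⟩
    simp only [hJ, Set.mem_Ico] at hθ
    simp only [hK, Set.mem_Ico] at hv
    have hθIco : θ ∈ Set.Ico (0:ℝ) (2 * π) := by
      constructor
      · linarith
      · have : δ' ≤ 2 * π - θs := min_le_right _ _
        linarith
    have hφlt : phiF m θ₀ θ < -m + ε := by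
      have hmem : θ ∈ Metric.ball θs δ := by
        rw [Metric.mem_ball, Real.dist_eq, abs_lt]
        have : δ' ≤ δ := min_le_left _ _
        constructor <;> linarith
      have := hball hmem
      simpa using this
    have hφge : -m ≤ phiF m θ₀ θ := phi_ge hm θ
    have hv0 : 0 ≤ v := le_trans (Real.sqrt_nonneg _) hv.1
    have hv2lo : 2 * (x + m) ≤ v ^ 2 := by
      have h := pow_le_pow_left₀ (Real.sqrt_nonneg (2 * (x + m))) hv.1 2
      rwa [Real.sq_sqrt (by linarith : (0:ℝ) ≤ 2 * (x + m))] at h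
    have hv2hi : v ^ 2 < 2 * (x + m) + (y - x) := by
      have := (Real.lt_sqrt hv0).1 hv.2
      linarith
    refine ⟨hθIco, ?_, ?_⟩
    · show x ≤ v ^ 2 / 2 + phiF m θ₀ θ
      linarith
    · show v ^ 2 / 2 + phiF m θ₀ θ < y
      simp only [hε] at hφlt; linarith
  -- volume of box positive
  have hKlen : Real.sqrt (2 * (x + m)) < Real.sqrt (2 * (x + m) + (y - x)) :=
    Real.sqrt_lt_sqrt (by linarith) (by linarith)
  have hvolbox : 0 < volume (J ×ˢ K) := by
    rw [Measure.volume_eq_prod, Measure.prod_prod]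
    simp only [hJ, hK, Real.volume_Ico]
    apply ENNReal.mul_pos
    · simp only [ne_eq, ENNReal.ofReal_eq_zero, not_le]; linarith
    · simp only [ne_eq, ENNReal.ofReal_eq_zero, not_le]; linarith
  have hboxmeas : MeasurableSet (J ×ˢ K) := measurableSet_Ico.prod measurableSet_Ico
  set Sx := {p : ℝ × ℝ | p.1 ∈ Set.Ico (0:ℝ) (2 * π) ∧ p.2 ^ 2 / 2 + phiF m θ₀ p.1 < x} with hSx
  have hdisj : Disjoint Sx (J ×ˢ K) := by
    rw [Set.disjoint_left]
    rintro p hpSx hpB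
    have h1 : x ≤ p.2 ^ 2 / 2 + phiF m θ₀ p.1 := (hbox p hpB).2.1
    have h2 := hpSx.2
    linarith
  have hsub : Sx ∪ J ×ˢ K ⊆ {p : ℝ × ℝ | p.1 ∈ Set.Ico (0:ℝ) (2 * π) ∧ p.2 ^ 2 / 2 + phiF m θ₀ p.1 < y} := by
    rintro p (hp | hp)
    · exact ⟨hp.1, lt_trans hp.2 hxy⟩
    · obtain ⟨h1, _, h3⟩ := hbox p hp
      exact ⟨h1, h3⟩
  calc aVol (phiF m θ₀) x < aVol (phiF m θ₀) x + volume (J ×ˢ K) :=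
        ENNReal.lt_add_right (aVol_lt_top hm x).ne (ne_of_gt hvolbox)
    _ = volume (Sx ∪ J ×ˢ K) := (measure_union hdisj hboxmeas).symm
    _ ≤ aVol (phiF m θ₀) y := measure_mono hsub

lemma level_null (e : ℝ) :
    volume {p : ℝ × ℝ | p.1 ∈ Set.Ico (0:ℝ) (2 * π) ∧ EF m θ₀ p = e} = 0 := by
  have hmeas : MeasurableSet {p : ℝ × ℝ | p.1 ∈ Set.Ico (0:ℝ) (2 * π) ∧ EF m θ₀ p = e} :=
    strip_meas.inter ((E_meas (m := m) (θ₀ := θ₀)) (measurableSet_singleton e))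
  rw [Measure.volume_eq_prod, Measure.measure_prod_null hmeas]
  refine Filter.Eventually.of_forall (fun θ => ?_)
  show volume (Prod.mk θ ⁻¹' {p : ℝ × ℝ | p.1 ∈ Set.Ico (0:ℝ) (2 * π) ∧ EF m θ₀ p = e}) = 0
  refine measure_mono_null (t := ({Real.sqrt (2 * (e - phiF m θ₀ θ)),
      -Real.sqrt (2 * (e - phiF m θ₀ θ))} : Set ℝ)) ?_
      (((Set.countable_singleton _).insert _).measure_zero _)
  intro v hv
  simp only [Set.mem_preimage, Set.mem_setOf_eq] at hv
  have hv2 : v ^ 2 = 2 * (e - phiF m θ₀ θ) := by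
    have h2 : v ^ 2 / 2 + phiF m θ₀ θ = e := hv.2
    linarith
  have habs : |v| = Real.sqrt (2 * (e - phiF m θ₀ θ)) := by
    rw [← hv2, Real.sqrt_sq_eq_abs]
  rcases abs_eq (Real.sqrt_nonneg (2 * (e - phiF m θ₀ θ))) |>.1 habs with h | h
  · exact Set.mem_insert_iff.2 (Or.inl h)
  · exact Set.mem_insert_iff.2 (Or.inr (by simpa using h))

lemma sFun_meas (hm : 0 ≤ m) :
    Measurable (fun p : ℝ × ℝ => (aVol (phiF m θ₀) (EF m θ₀ p)).toReal) := by
  have h1 : Monotone (fun e : ℝ => (aVol (phiF m θ₀) e).toReal) := fun u w huw =>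
    ENNReal.toReal_mono (aVol_lt_top hm w).ne (aVol_mono _ huw)
  exact h1.measurable.comp E_meas


lemma key_Iic (hm : 0 ≤ m) (aInv : ℝ → ℝ)
    (haInv : ∀ s ≥ (0:ℝ), -m ≤ aInv s ∧ aVol (phiF m θ₀) (aInv s) = ENNReal.ofReal s)
    (t : ℝ) :
    volume ({p : ℝ × ℝ | (aVol (phiF m θ₀) (EF m θ₀ p)).toReal ≤ t} ∩ stripS)
      = ENNReal.ofReal t := by
  rcases le_or_gt 0 t with ht | ht
  · obtain ⟨he1, he2⟩ := haInv t ht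
    have hset : {p : ℝ × ℝ | (aVol (phiF m θ₀) (EF m θ₀ p)).toReal ≤ t} ∩ stripS
        = {p : ℝ × ℝ | p.1 ∈ Set.Ico (0:ℝ) (2 * π) ∧ p.2 ^ 2 / 2 + phiF m θ₀ p.1 < aInv t}
          ∪ {p : ℝ × ℝ | p.1 ∈ Set.Ico (0:ℝ) (2 * π) ∧ EF m θ₀ p = aInv t} := by
      ext p
      have hfin := (aVol_lt_top (θ₀ := θ₀) hm (EF m θ₀ p)).ne
      have hiff : (aVol (phiF m θ₀) (EF m θ₀ p)).toReal ≤ t ↔ EF m θ₀ p ≤ aInv t := by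
        rw [← ENNReal.le_ofReal_iff_toReal_le hfin ht, ← he2]
        constructor
        · intro h
          by_contra hlt
          push_neg at hlt
          exact absurd (aVol_strict hm he1 hlt) (not_lt.2 h)
        · exact fun h => aVol_mono _ h
      constructor
      · rintro ⟨h1, h2⟩
        have h1' : (aVol (phiF m θ₀) (EF m θ₀ p)).toReal ≤ t := h1
        rcases lt_or_eq_of_le (hiff.1 h1') with h | h
        · exact Or.inl ⟨h2, h⟩
        · exact Or.inr ⟨h2, h⟩
      · rintro (⟨h1, h2⟩ | ⟨h1, h2⟩)
        · have h2' : EF m θ₀ p ≤ aInv t := le_of_lt h2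
          exact ⟨hiff.2 h2', h1⟩
        · exact ⟨hiff.2 (le_of_eq h2), h1⟩
    rw [hset]
    refine le_antisymm ?_ ?_
    · refine le_trans (measure_union_le _ _) ?_
      rw [level_null]
      rw [show volume {p : ℝ × ℝ | p.1 ∈ Set.Ico (0:ℝ) (2 * π)
            ∧ p.2 ^ 2 / 2 + phiF m θ₀ p.1 < aInv t} = aVol (phiF m θ₀) (aInv t) from rfl, he2]
      simp
    · calc ENNReal.ofReal t = aVol (phiF m θ₀) (aInv t) := he2.symm
        _ ≤ _ := measure_mono subset_union_left
  · have hempty : {p : ℝ × ℝ | (aVol (phiF m θ₀) (EF m θ₀ p)).toReal ≤ t} ∩ stripS = ∅ := by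
      ext p
      simp only [Set.mem_inter_iff, Set.mem_setOf_eq, Set.mem_empty_iff_false, iff_false,
        not_and]
      intro h1
      exact absurd (le_trans ENNReal.toReal_nonneg h1) (not_le.2 ht)
    rw [hempty, measure_empty, Eq.comm, ENNReal.ofReal_eq_zero]
    exact ht.le

lemma restrict_Ioi_Ioc {a b : ℝ} (hab : a < b) :
    (volume.restrict (Set.Ioi (0:ℝ))) (Set.Ioc a b)
      = ENNReal.ofReal b - ENNReal.ofReal a := by
  rw [Measure.restrict_apply measurableSet_Ioc]
  rcases le_or_gt b 0 with hb | hb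
  · have h1 : Set.Ioc a b ∩ Set.Ioi (0:ℝ) = ∅ := by
      ext x
      simp only [Set.mem_inter_iff, Set.mem_Ioc, Set.mem_Ioi, Set.mem_empty_iff_false, iff_false,
        not_and]
      rintro ⟨_, h2⟩ h3
      linarith
    rw [h1, measure_empty, ENNReal.ofReal_eq_zero.2 hb, Eq.comm]
    exact zero_tsub _
  · have h1 : Set.Ioc a b ∩ Set.Ioi (0:ℝ) = Set.Ioc (max a 0) b := by
      ext x
      simp only [Set.mem_inter_iff, Set.mem_Ioc, Set.mem_Ioi, max_lt_iff]
      tauto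
    rw [h1, Real.volume_Ioc]
    rcases le_total a 0 with ha | ha
    · simp [max_eq_right ha, ENNReal.ofReal_eq_zero.2 ha]
    · rw [max_eq_left ha, ENNReal.ofReal_sub _ ha]

lemma map_sFun (hm : 0 ≤ m) (aInv : ℝ → ℝ)
    (haInv : ∀ s ≥ (0:ℝ), -m ≤ aInv s ∧ aVol (phiF m θ₀) (aInv s) = ENNReal.ofReal s) :
    Measure.map (fun p : ℝ × ℝ => (aVol (phiF m θ₀) (EF m θ₀ p)).toReal)
        (volume.restrict stripS)
      = volume.restrict (Set.Ioi (0:ℝ)) := by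
  have hsf := sFun_meas (θ₀ := θ₀) hm
  set ν := Measure.map (fun p : ℝ × ℝ => (aVol (phiF m θ₀) (EF m θ₀ p)).toReal)
      (volume.restrict stripS) with hν
  have hIic : ∀ t : ℝ, ν (Set.Iic t) = ENNReal.ofReal t := by
    intro t
    rw [hν, Measure.map_apply hsf measurableSet_Iic,
      Measure.restrict_apply (hsf measurableSet_Iic)]
    exact key_Iic hm aInv haInv t
  have hIoc : ∀ ⦃a b : ℝ⦄, a < b → ν (Set.Ioc a b) = ENNReal.ofReal b - ENNReal.ofReal a := by
    intro a b hab
    have h1 : Set.Ioc a b = Set.Iic b \ Set.Iic a := (Set.Iic_sdiff_Iic).symm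
    rw [h1, measure_diff (Set.Iic_subset_Iic.2 hab.le) measurableSet_Iic.nullMeasurableSet
      (by rw [hIic]; exact ENNReal.ofReal_ne_top), hIic, hIic]
  refine Measure.ext_of_Ioc' ν _ ?_ ?_
  · intro a b hab
    rw [hIoc hab]
    exact ne_top_of_le_ne_top ENNReal.ofReal_ne_top tsub_le_self
  · intro a b hab
    rw [hIoc hab, restrict_Ioi_Ioc hab]


lemma pseudo_nonempty (f : ℝ × ℝ → ℝ) (hfm : Measurable f) (hf0 : ∀ p, 0 ≤ f p)
    (hfint : IntegrableOn f stripS volume) {s : ℝ} (hs : 0 < s) :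
    {t : ℝ | 0 ≤ t ∧ distrib f t ≤ ENNReal.ofReal s}.Nonempty := by
  set C : ℝ≥0∞ := ∫⁻ p in stripS, ENNReal.ofReal (f p) ∂volume with hC
  have hCfin : C ≠ ∞ := by
    have h1 := hfint.2
    have h2 : C = ∫⁻ p in stripS, (‖f p‖₊ : ℝ≥0∞) ∂volume := by
      refine lintegral_congr fun p => ?_
      rw [← enorm_eq_nnnorm, Real.enorm_eq_ofReal (hf0 p)]
    rw [h2]
    exact h1.ne
  refine ⟨C.toReal / s + 1, ⟨by positivity, ?_⟩⟩
  set t := C.toReal / s + 1 with htdef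
  have ht : 0 < t := by positivity
  have h2 : distrib f t ≤ (volume.restrict stripS)
      {p : ℝ × ℝ | ENNReal.ofReal t ≤ ENNReal.ofReal (f p)} := by
    rw [Measure.restrict_apply' strip_meas]
    apply measure_mono
    rintro p ⟨h3, h4⟩
    exact ⟨ENNReal.ofReal_le_ofReal h4.le, h3⟩
  have h3 := mul_meas_ge_le_lintegral₀ (μ := volume.restrict stripS)
      (hfm.ennreal_ofReal.aemeasurable) (ENNReal.ofReal t)
  have h4 : distrib f t ≤ C / ENNReal.ofReal t := by
    rw [ENNReal.le_div_iff_mul_le (Or.inl (ENNReal.ofReal_pos.2 ht).ne')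
      (Or.inl ENNReal.ofReal_ne_top)]
    calc distrib f t * ENNReal.ofReal t
        ≤ (volume.restrict stripS) {p : ℝ × ℝ | ENNReal.ofReal t ≤ ENNReal.ofReal (f p)}
            * ENNReal.ofReal t := mul_le_mul_left h2 _
      _ ≤ C := by rw [mul_comm]; exact h3
  refine le_trans h4 ?_
  apply ENNReal.div_le_of_le_mul
  rw [← ENNReal.ofReal_mul hs.le]
  have h5 : s * t = C.toReal + s := by
    rw [htdef]
    field_simp
  rw [h5]
  calc C = ENNReal.ofReal C.toReal := (ENNReal.ofReal_toReal hCfin).symm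
    _ ≤ _ := ENNReal.ofReal_le_ofReal (le_add_of_nonneg_right hs.le)

end aux

/-- for φ(θ) = -m cos(θ - θ₀), m ≥ 0, and nonnegative f ∈ L¹,
∬ (v²/2 + φ(θ)) f^{*φ}(θ,v) dθ dv = ∫₀^∞ f^♯(s) a_φ⁻¹(s) ds. -/
theorem energy_of_rearrangement (m θ₀ : ℝ) (hm : 0 ≤ m)
    (f : ℝ × ℝ → ℝ) (hfm : Measurable f) (hf0 : ∀ p, 0 ≤ f p)
    (hfint : IntegrableOn f {p : ℝ × ℝ | p.1 ∈ Set.Ico (0:ℝ) (2 * π)} volume)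
    (aInv : ℝ → ℝ)
    (haInv : ∀ s ≥ (0:ℝ), -m ≤ aInv s ∧
        aVol (fun θ => -(m * Real.cos (θ - θ₀))) (aInv s) = ENNReal.ofReal s) :
    ∫ p in {p : ℝ × ℝ | p.1 ∈ Set.Ico (0:ℝ) (2 * π)},
        (p.2 ^ 2 / 2 + (-(m * Real.cos (p.1 - θ₀)))) *
          pseudoInv f (aVol (fun θ => -(m * Real.cos (θ - θ₀)))
            (p.2 ^ 2 / 2 + (-(m * Real.cos (p.1 - θ₀)))))
      = ∫ s in Set.Ioi (0:ℝ), pseudoInv f (ENNReal.ofReal s) * aInv s := by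
  have haInv' : ∀ s ≥ (0:ℝ), -m ≤ aInv s ∧ aVol (phiF m θ₀) (aInv s) = ENNReal.ofReal s := haInv
  have hmain := map_sFun (θ₀ := θ₀) hm aInv haInv'
  show ∫ p in stripS, (EF m θ₀ p) * pseudoInv f (aVol (phiF m θ₀) (EF m θ₀ p))
      = ∫ s in Set.Ioi (0:ℝ), pseudoInv f (ENNReal.ofReal s) * aInv s
  set Φ : ℝ → ℝ := fun s => pseudoInv f (ENNReal.ofReal s) * aInv s with hΦ
  have hpoint : ∀ p : ℝ × ℝ, EF m θ₀ p * pseudoInv f (aVol (phiF m θ₀) (EF m θ₀ p))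
      = Φ ((aVol (phiF m θ₀) (EF m θ₀ p)).toReal) := by
    intro p
    have hfin := (aVol_lt_top (θ₀ := θ₀) hm (EF m θ₀ p)).ne
    have hs0 : (0:ℝ) ≤ (aVol (phiF m θ₀) (EF m θ₀ p)).toReal := ENNReal.toReal_nonneg
    obtain ⟨hg1, hg2⟩ := haInv' _ hs0
    have hofr : ENNReal.ofReal ((aVol (phiF m θ₀) (EF m θ₀ p)).toReal)
        = aVol (phiF m θ₀) (EF m θ₀ p) := ENNReal.ofReal_toReal hfin
    have hE : EF m θ₀ p = aInv ((aVol (phiF m θ₀) (EF m θ₀ p)).toReal) := by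
      rcases lt_trichotomy (EF m θ₀ p)
        (aInv ((aVol (phiF m θ₀) (EF m θ₀ p)).toReal)) with h | h | h
      · exfalso
        have h1 := aVol_strict (θ₀ := θ₀) hm (E_ge hm p) h
        rw [hg2, hofr] at h1
        exact lt_irrefl _ h1
      · exact h
      · exfalso
        have h1 := aVol_strict (θ₀ := θ₀) hm hg1 h
        rw [hg2, hofr] at h1
        exact lt_irrefl _ h1
    simp only [hΦ]
    rw [hofr, ← hE, mul_comm]
  have step1 : ∫ p in stripS, EF m θ₀ p * pseudoInv f (aVol (phiF m θ₀) (EF m θ₀ p))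
      = ∫ p in stripS, Φ ((aVol (phiF m θ₀) (EF m θ₀ p)).toReal) :=
    integral_congr_ae (Filter.Eventually.of_forall hpoint)
  have hψ : AEMeasurable (fun s : ℝ => pseudoInv f (ENNReal.ofReal s))
      (volume.restrict (Set.Ioi (0:ℝ))) := by
    apply aemeasurable_restrict_of_antitoneOn measurableSet_Ioi
    intro s hs s' _ hss'
    exact csInf_le_csInf ⟨0, fun u hu => hu.1⟩ (pseudo_nonempty f hfm hf0 hfint hs)
      (fun u hu => ⟨hu.1, le_trans hu.2 (ENNReal.ofReal_le_ofReal hss')⟩)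
  have haInvM : AEMeasurable aInv (volume.restrict (Set.Ioi (0:ℝ))) := by
    apply aemeasurable_restrict_of_monotoneOn measurableSet_Ioi
    intro s hs s' hs' hss'
    by_contra h
    push_neg at h
    have h1 := aVol_strict (θ₀ := θ₀) hm (haInv' s' hs'.le).1 h
    rw [(haInv' s' hs'.le).2, (haInv' s hs.le).2] at h1
    exact absurd h1 (not_lt.2 (ENNReal.ofReal_le_ofReal hss'))
  have hΦm : AEStronglyMeasurable Φ (volume.restrict (Set.Ioi (0:ℝ))) :=
    (hψ.mul haInvM).aestronglyMeasurable
  have hint := integral_map (μ := volume.restrict stripS)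
      (sFun_meas (θ₀ := θ₀) hm).aemeasurable (f := Φ) (by rw [hmain]; exact hΦm)
  rw [hmain] at hint
  rw [step1, ← hint]
end

section
/- Let f₀(θ,v) = F(v²/2 + φ₀(θ)) with φ₀(θ) = -m₀ cos θ, m₀ > 0, where F: ℝ → ℝ₊ is continuous, C¹ and strictly decreasing on (-∞, e_*) with F = 0 on [e_*, ∞) (or F(e) → 0 as e → ∞ if e_* = ∞). Then f₀ is a fixed point of the rearrangement with respect to its own microscopic energy: f₀ = f₀^{*φ₀}, equivalently F(e) = f₀^♯(a_{φ₀}(e)) for all e ≥ min φ₀. -/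
open MeasureTheory Real Set
open scoped ENNReal

/-- Auxiliary: the phase-space volume is finite. -/
lemma aVol_lt_top_s19 (m₀ : ℝ) (e : ℝ) : aVol (fun θ => -(m₀ * Real.cos θ)) e < ⊤ := by
  set R : ℝ := Real.sqrt (2 * (|e| + |m₀|)) with hR
  have hsub : {p : ℝ × ℝ | p.1 ∈ Set.Ico (0:ℝ) (2 * π) ∧
      p.2 ^ 2 / 2 + (fun θ => -(m₀ * Real.cos θ)) p.1 < e} ⊆
      Set.Ico (0:ℝ) (2 * π) ×ˢ Set.Icc (-R) R := by
    rintro ⟨θ, v⟩ ⟨h1, h2⟩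
    simp only at h2
    refine ⟨h1, ?_⟩
    have hcos : |Real.cos θ| ≤ 1 := Real.abs_cos_le_one θ
    have hv2 : v ^ 2 ≤ 2 * (|e| + |m₀|) := by
      have h3 : v ^ 2 / 2 < e + m₀ * Real.cos θ := by linarith
      have : m₀ * Real.cos θ ≤ |m₀| := by
        calc m₀ * Real.cos θ ≤ |m₀ * Real.cos θ| := le_abs_self _
        _ = |m₀| * |Real.cos θ| := abs_mul _ _
        _ ≤ |m₀| * 1 := by
            exact mul_le_mul_of_nonneg_left hcos (abs_nonneg _)
        _ = |m₀| := mul_one _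
      nlinarith [le_abs_self e]
    have habs : |v| ≤ R := by
      rw [hR]
      have : |v| = Real.sqrt (v ^ 2) := (Real.sqrt_sq_eq_abs v).symm
      rw [this]
      exact Real.sqrt_le_sqrt hv2
    exact abs_le.mp habs
  calc aVol (fun θ => -(m₀ * Real.cos θ)) e
      ≤ volume (Set.Ico (0:ℝ) (2 * π) ×ˢ Set.Icc (-R) R) := measure_mono hsub
    _ < ⊤ := by
        rw [MeasureTheory.Measure.volume_eq_prod, MeasureTheory.Measure.prod_prod]
        exact ENNReal.mul_lt_top (by simp [Real.volume_Ico]; exact ENNReal.mul_lt_top (by simp) (by simp)) (by simp [Real.volume_Icc])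

/-- Auxiliary: strict monotonicity of the phase-space volume on `[-m₀, ∞)`. -/
lemma aVol_strictMono (m₀ : ℝ) (hm₀ : 0 < m₀) {e e' : ℝ} (he : -m₀ ≤ e) (hee' : e < e') :
    aVol (fun θ => -(m₀ * Real.cos θ)) e < aVol (fun θ => -(m₀ * Real.cos θ)) e' := by
  -- choose δ > 0 with m₀ (1 - cos θ) < (e' - e)/2 for θ ∈ [0, δ) and δ ≤ 2π
  have hcont : ContinuousAt (fun θ : ℝ => m₀ * (1 - Real.cos θ)) 0 := by fun_prop
  have h0 : (fun θ : ℝ => m₀ * (1 - Real.cos θ)) 0 = 0 := by simp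
  have hev : ∀ᶠ θ in nhds (0:ℝ), m₀ * (1 - Real.cos θ) < (e' - e) / 2 := by
    refine hcont.eventually_lt_const ?_
    simp only [Real.cos_zero, sub_self, mul_zero]
    linarith
  obtain ⟨ε, hε, hball⟩ := Metric.eventually_nhds_iff.mp hev
  have hπ : (0:ℝ) < 2 * π := by positivity
  set δ : ℝ := min ε (2 * π) with hδdef
  have hδ : 0 < δ := lt_min hε hπ
  have hδ2π : δ ≤ 2 * π := min_le_right _ _
  have hδball : ∀ θ : ℝ, 0 ≤ θ → θ < δ → m₀ * (1 - Real.cos θ) < (e' - e) / 2 := by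
    intro θ h1 h2
    apply hball
    rw [Real.dist_eq, sub_zero, abs_of_nonneg h1]
    exact lt_of_lt_of_le h2 (min_le_left _ _)
  set c : ℝ := Real.sqrt (2 * (e + m₀)) with hc
  set c' : ℝ := Real.sqrt (2 * (e + m₀) + (e' - e)) with hc'
  have hem : 0 ≤ 2 * (e + m₀) := by linarith
  have hcc' : c < c' := Real.sqrt_lt_sqrt hem (by linarith)
  have hc0 : 0 ≤ c := Real.sqrt_nonneg _
  set B : Set (ℝ × ℝ) := Set.Ico 0 δ ×ˢ Set.Ioo c c' with hB
  set S : Set (ℝ × ℝ) := {p : ℝ × ℝ | p.1 ∈ Set.Ico (0:ℝ) (2 * π) ∧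
      p.2 ^ 2 / 2 + (fun θ => -(m₀ * Real.cos θ)) p.1 < e} with hS
  -- B is disjoint from S and contained in the set for e'
  have hBE : ∀ p ∈ B, e < p.2 ^ 2 / 2 - m₀ * Real.cos p.1 ∧
      p.2 ^ 2 / 2 - m₀ * Real.cos p.1 < e' := by
    rintro ⟨θ, v⟩ ⟨⟨hθ0, hθδ⟩, hv1, hv2⟩
    simp only at *
    have hvc : c < v := hv1
    have hv2' : v < c' := hv2
    have hvsq : 2 * (e + m₀) < v ^ 2 := by
      have := Real.sq_sqrt hem
      nlinarith
    have hvsq' : v ^ 2 < 2 * (e + m₀) + (e' - e) := by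
      have h1 := Real.sq_sqrt (by linarith : (0:ℝ) ≤ 2 * (e + m₀) + (e' - e))
      nlinarith [hc0.trans hvc.le]
    have hcos1 : Real.cos θ ≤ 1 := Real.cos_le_one θ
    have hcosδ := hδball θ hθ0 hθδ
    constructor
    · nlinarith
    · nlinarith
  have hdisj : Disjoint S B := by
    rw [Set.disjoint_left]
    rintro p hpS hpB
    have := (hBE p hpB).1
    have h2 := hpS.2
    simp only at h2
    linarith
  have hBsub : B ⊆ {p : ℝ × ℝ | p.1 ∈ Set.Ico (0:ℝ) (2 * π) ∧
      p.2 ^ 2 / 2 + (fun θ => -(m₀ * Real.cos θ)) p.1 < e'} := by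
    rintro ⟨θ, v⟩ hp
    obtain ⟨h1, h2⟩ := hBE _ hp
    obtain ⟨⟨hθ0, hθδ⟩, _⟩ := hp
    exact ⟨⟨hθ0, lt_of_lt_of_le hθδ hδ2π⟩, by simp only; linarith⟩
  have hSsub : S ⊆ {p : ℝ × ℝ | p.1 ∈ Set.Ico (0:ℝ) (2 * π) ∧
      p.2 ^ 2 / 2 + (fun θ => -(m₀ * Real.cos θ)) p.1 < e'} := by
    rintro p ⟨h1, h2⟩
    exact ⟨h1, lt_trans h2 hee'⟩
  have hBmeas : MeasurableSet B := (measurableSet_Ico.prod measurableSet_Ioo)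
  have hvolB : volume B ≠ 0 := by
    rw [hB, MeasureTheory.Measure.volume_eq_prod, MeasureTheory.Measure.prod_prod,
      Real.volume_Ico, Real.volume_Ioo]
    simp only [ne_eq, mul_eq_zero, ENNReal.ofReal_eq_zero, not_or, not_le]
    constructor <;> linarith
  calc aVol (fun θ => -(m₀ * Real.cos θ)) e = volume S := rfl
    _ < volume S + volume B :=
        ENNReal.lt_add_right (aVol_lt_top_s19 m₀ e).ne hvolB
    _ = volume (S ∪ B) := (measure_union hdisj hBmeas).symm
    _ ≤ aVol (fun θ => -(m₀ * Real.cos θ)) e' :=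
        measure_mono (Set.union_subset hSsub hBsub)

/-- a steady state f₀(θ,v) = F(v²/2 - m₀ cos θ) with F continuous,
nonnegative, C¹ and strictly decreasing on (-∞,e_*), vanishing on [e_*,∞) (resp.
tending to 0 at +∞ when e_* = +∞) is a fixed point of the rearrangement with respect
to its own microscopic energy: F(e) = f₀^♯(a_{φ₀}(e)) for all e ≥ min φ₀ = -m₀,
i.e. f₀ = f₀^{*φ₀}. -/
theorem steady_state_fixed_point (m₀ : ℝ) (hm₀ : 0 < m₀)
    (F : ℝ → ℝ) (estar : EReal)
    (hFc : Continuous F) (hF0 : ∀ e, 0 ≤ F e)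
    (hFC1 : ContDiffOn ℝ 1 F {e : ℝ | (e : EReal) < estar})
    (hFanti : StrictAntiOn F {e : ℝ | (e : EReal) < estar})
    (hFzero : ∀ e : ℝ, estar ≤ (e : EReal) → F e = 0)
    (hFtop : estar = ⊤ → Filter.Tendsto F Filter.atTop (nhds 0))
    (hf0int : IntegrableOn (fun p : ℝ × ℝ => F (p.2 ^ 2 / 2 - m₀ * Real.cos p.1))
        {p : ℝ × ℝ | p.1 ∈ Set.Ico (0:ℝ) (2 * π)} volume) :
    (∀ e : ℝ, -m₀ ≤ e →
        F e = pseudoInv (fun p : ℝ × ℝ => F (p.2 ^ 2 / 2 - m₀ * Real.cos p.1))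
          (aVol (fun θ => -(m₀ * Real.cos θ)) e)) ∧
    (∀ p : ℝ × ℝ,
        F (p.2 ^ 2 / 2 - m₀ * Real.cos p.1)
          = pseudoInv (fun q : ℝ × ℝ => F (q.2 ^ 2 / 2 - m₀ * Real.cos q.1))
              (aVol (fun θ => -(m₀ * Real.cos θ)) (p.2 ^ 2 / 2 - m₀ * Real.cos p.1))) := by
  set f₀ : ℝ × ℝ → ℝ := fun p : ℝ × ℝ => F (p.2 ^ 2 / 2 - m₀ * Real.cos p.1) with hf₀
  -- F is antitone on all of ℝ
  have hanti : Antitone F := by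
    intro x y hxy
    rcases lt_or_ge ((y : ℝ) : EReal) estar with hy | hy
    · rcases eq_or_lt_of_le hxy with h | h
      · rw [h]
      · exact le_of_lt (hFanti (lt_trans (EReal.coe_lt_coe_iff.mpr h) hy) hy h)
    · rw [hFzero y hy]; exact hF0 x
  -- F is positive strictly below estar
  have hpos : ∀ x : ℝ, ((x : ℝ) : EReal) < estar → 0 < F x := by
    intro x hx
    obtain ⟨z, hz1, hz2⟩ := EReal.exists_between_coe_real hx
    have hxz : x < z := EReal.coe_lt_coe_iff.mp hz1
    have : F z < F x := hFanti (lt_trans hz1 hz2) hz2 hxz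
    exact lt_of_le_of_lt (hF0 z) this
  -- main claim
  have main : ∀ e : ℝ, -m₀ ≤ e →
      F e = pseudoInv f₀ (aVol (fun θ => -(m₀ * Real.cos θ)) e) := by
    intro e he
    set a := aVol (fun θ => -(m₀ * Real.cos θ)) e with ha
    set S : Set ℝ := {t : ℝ | 0 ≤ t ∧ distrib f₀ t ≤ a} with hSdef
    have hbdd : BddBelow S := ⟨0, fun t ht => ht.1⟩
    rcases le_or_gt estar ((e : ℝ) : EReal) with hcase | hcase
    · -- case F e = 0
      have hFe : F e = 0 := hFzero e hcase
      have h0S : (0 : ℝ) ∈ S := by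
        refine ⟨le_refl 0, ?_⟩
        rw [ha]
        apply measure_mono
        rintro ⟨θ, v⟩ ⟨h1, h2⟩
        refine ⟨h1, ?_⟩
        simp only [hf₀] at h2
        -- 0 < F (E p) forces E p < estar ≤ e
        by_contra hcon
        push_neg at hcon
        simp only [not_lt] at hcon
        have hEe : e ≤ v ^ 2 / 2 + -(m₀ * Real.cos θ) := by
          simpa using hcon
        have : estar ≤ ((v ^ 2 / 2 - m₀ * Real.cos θ : ℝ) : EReal) := by
          refine le_trans hcase ?_
          rw [EReal.coe_le_coe_iff]
          linarith
        rw [hFzero _ this] at h2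
        exact lt_irrefl 0 h2
      have : sInf S = 0 :=
        le_antisymm (csInf_le hbdd h0S) (le_csInf ⟨0, h0S⟩ fun t ht => ht.1)
      rw [hFe, pseudoInv]
      exact this.symm
    · -- case e < estar, so F e > 0
      have hFe : 0 < F e := hpos e hcase
      -- distrib f₀ (F e) = a
      have hdist : distrib f₀ (F e) = a := by
        rw [ha, distrib, aVol]
        congr 1
        ext ⟨θ, v⟩
        simp only [Set.mem_setOf_eq, hf₀]
        constructor
        · rintro ⟨h1, h2⟩
          refine ⟨h1, ?_⟩
          by_contra hcon
          push_neg at hcon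
          have : F (v ^ 2 / 2 - m₀ * Real.cos θ) ≤ F e := by
            apply hanti; linarith
          linarith
        · rintro ⟨h1, h2⟩
          refine ⟨h1, ?_⟩
          apply hFanti
          · exact lt_trans (EReal.coe_lt_coe_iff.mpr (by linarith)) hcase
          · exact hcase
          · linarith
      have hFeS : F e ∈ S := ⟨(hF0 e), by rw [hdist]⟩
      have hlb : ∀ t ∈ S, F e ≤ t := by
        intro t ht
        by_contra hcon
        push_neg at hcon
        obtain ⟨ht0, htμ⟩ := ht
        -- find e'' > e with t < F e''
        have hex : ∃ e'' : ℝ, e < e'' ∧ t < F e'' := by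
          by_contra hcon2
          push_neg at hcon2
          have : F e ≤ t := by
            have htend : Filter.Tendsto F (nhdsWithin e (Set.Ioi e)) (nhds (F e)) :=
              (hFc.continuousAt.tendsto).mono_left nhdsWithin_le_nhds
            refine le_of_tendsto htend ?_
            filter_upwards [self_mem_nhdsWithin] with x hx
            exact hcon2 x hx
          linarith
        obtain ⟨e'', he''1, he''2⟩ := hex
        have hsub : {p : ℝ × ℝ | p.1 ∈ Set.Ico (0:ℝ) (2 * π) ∧
            p.2 ^ 2 / 2 + (fun θ => -(m₀ * Real.cos θ)) p.1 < e''} ⊆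
            {p : ℝ × ℝ | p.1 ∈ Set.Ico (0:ℝ) (2 * π) ∧ t < f₀ p} := by
          rintro ⟨θ, v⟩ ⟨h1, h2⟩
          refine ⟨h1, ?_⟩
          simp only at h2
          have : F e'' ≤ F (v ^ 2 / 2 - m₀ * Real.cos θ) := by
            apply hanti; linarith
          simp only [hf₀]
          linarith
        have h1 : aVol (fun θ => -(m₀ * Real.cos θ)) e'' ≤ distrib f₀ t :=
          measure_mono hsub
        have h2 : a < aVol (fun θ => -(m₀ * Real.cos θ)) e'' := by
          rw [ha]; exact aVol_strictMono m₀ hm₀ he he''1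
        exact absurd (le_trans h1 htμ) (not_le.mpr h2)
      exact (le_antisymm (csInf_le hbdd hFeS) (le_csInf ⟨F e, hFeS⟩ hlb)).symm
  refine ⟨main, fun p => ?_⟩
  apply main
  have hcos : Real.cos p.1 ≤ 1 := Real.cos_le_one p.1
  nlinarith [sq_nonneg p.2]
end
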